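/- Let (G, D) be a 3-transposition group with D finite, and assume that D is an indecomposable rack under conjugation. Let Y ⊆ D be a minimal subset generating D as a rack (i.e., the smallest subrack of D containing Y is D, and no proper subset of Y has this property). Then the graph 𝒢(Y) with vertex set Y, in which distinct x, y ∈ Y are adjacent if and only if the order of xy in G is 3, is connected. -/

import Mathlib

structure Rack' (X : Type*) where
  act : X → X → X
  act_bijective : ∀ x, Function.Bijective (act x)
  self_distrib : ∀ x y z, act x (act y z) = act (act x y) (act x z)

namespace Rack'

variable {X : Type*} (R : Rack' X)

/-- The left translation `φ_x : y ↦ x ▷ y` as a permutation of `X`. -/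
noncomputable def phi (x : X) : Equiv.Perm X :=
  Equiv.ofBijective (R.act x) (R.act_bijective x)

@[simp] theorem phi_apply (x y : X) : R.phi x y = R.act x y := rfl

/-- A quandle is a rack with `x ▷ x = x`. -/
def IsQuandle : Prop := ∀ x, R.act x x = x

/-- A rack is braided if it is a quandle and for all `x, y` at least one of
`x ▷ (y ▷ x) = y` and `x ▷ y = y` holds. -/
def IsBraided : Prop :=
  R.IsQuandle ∧ ∀ x y, R.act x (R.act y x) = y ∨ R.act x y = y

/-- The inner group of a rack: the subgroup of the symmetric group generated by all
left translations. -/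
def innerGroup : Subgroup (Equiv.Perm X) :=
  Subgroup.closure (Set.range fun x => R.phi x)

/-- A rack is indecomposable if its inner group acts transitively. -/
def IsIndecomposable : Prop := ∀ x y : X, ∃ g ∈ R.innerGroup, g x = y

/-- A subrack: a nonempty subset closed under the operation which is itself a rack
under the restricted operation. -/
def IsSubrack (Y : Set X) : Prop :=
  Y.Nonempty ∧ (∀ x ∈ Y, ∀ y ∈ Y, R.act x y ∈ Y) ∧
    ∀ x ∈ Y, ∀ y ∈ Y, ∃ z ∈ Y, R.act x z = y

/-- The first Hurwitz braid `σ₁(x,y,z) = (x ▷ y, x, z)`. -/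
noncomputable def sigma1 : Equiv.Perm (X × X × X) :=
  Equiv.ofBijective (fun p => (R.act p.1 p.2.1, p.1, p.2.2)) (by
    constructor
    · rintro ⟨a, b, c⟩ ⟨a', b', c'⟩ h
      simp only [Prod.mk.injEq] at h
      obtain ⟨h1, rfl, rfl⟩ := h
      obtain rfl := (R.act_bijective a).1 h1
      rfl
    · rintro ⟨u, v, w⟩
      refine ⟨(v, (R.phi v).symm u, w), ?_⟩
      have h : R.act v ((R.phi v).symm u) = u := (R.phi v).apply_symm_apply u
      simp [h])

/-- The second Hurwitz braid `σ₂(x,y,z) = (x, y ▷ z, y)`. -/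
noncomputable def sigma2 : Equiv.Perm (X × X × X) :=
  Equiv.ofBijective (fun p => (p.1, R.act p.2.1 p.2.2, p.2.1)) (by
    constructor
    · rintro ⟨a, b, c⟩ ⟨a', b', c'⟩ h
      simp only [Prod.mk.injEq] at h
      obtain ⟨rfl, h1, rfl⟩ := h
      obtain rfl := (R.act_bijective b).1 h1
      rfl
    · rintro ⟨u, v, w⟩
      refine ⟨(u, w, (R.phi w).symm v), ?_⟩
      have h : R.act w ((R.phi w).symm v) = v := (R.phi w).apply_symm_apply v
      simp [h])

/-- The subgroup of the symmetric group of `X³` generated by the two Hurwitz braids. -/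
def hurwitzGroup : Subgroup (Equiv.Perm (X × X × X)) :=
  Subgroup.closure {R.sigma1, R.sigma2}

/-- The Hurwitz orbit of a triple. -/
def hurwitzOrbit (p : X × X × X) : Set (X × X × X) :=
  {q | ∃ g ∈ R.hurwitzGroup, g p = q}

/-- A subset of `X³` is a Hurwitz orbit if it is the Hurwitz orbit of some triple. -/
def IsHurwitzOrbit (O : Set (X × X × X)) : Prop := ∃ p, O = R.hurwitzOrbit p

/-- A quarantine of a Hurwitz orbit `O`: a nonempty subset `Q ⊆ O` such that for every
triple `(x,y,z) ∈ O`, if two of `(x,y,z)`, `(x, y▷z, y)`, `(x▷(y▷z), x, y)` lie in `Q`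
then so does the third. -/
def IsQuarantine (O Q : Set (X × X × X)) : Prop :=
  Q.Nonempty ∧ Q ⊆ O ∧ ∀ p ∈ O,
    ((p ∈ Q ∧ R.sigma2 p ∈ Q) → R.sigma1 (R.sigma2 p) ∈ Q) ∧
    ((p ∈ Q ∧ R.sigma1 (R.sigma2 p) ∈ Q) → R.sigma2 p ∈ Q) ∧
    ((R.sigma2 p ∈ Q ∧ R.sigma1 (R.sigma2 p) ∈ Q) → p ∈ Q)

/-- A plague of a Hurwitz orbit `O`: a subset `P ⊆ O` whose smallest containing
quarantine is `O` itself. -/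
def IsPlague (O P : Set (X × X × X)) : Prop :=
  P.Nonempty ∧ P ⊆ O ∧ ∀ Q, R.IsQuarantine O Q → P ⊆ Q → Q = O

/-- Two racks are isomorphic if there is a bijection respecting the operations. -/
def IsIsomorphic {Y : Type*} (S : Rack' Y) : Prop :=
  ∃ f : X ≃ Y, ∀ a b, f (R.act a b) = S.act (f a) (f b)

end Rack'

/-- The affine rack associated to an abelian group `A` and `g ∈ Aut(A)`:
`x ▷ y = (1 - g)(x) + g(y)`. -/
def affineRack (A : Type*) [AddCommGroup A] (g : A ≃+ A) : Rack' A where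
  act x y := (x - g x) + g y
  act_bijective x := by
    constructor
    · intro a b h
      exact g.injective (add_left_cancel h)
    · intro b
      exact ⟨g.symm (b - (x - g x)), by simp⟩
  self_distrib x y z := by
    simp only [map_add, map_sub]
    abel

/-- A subset of a group closed under conjugation is a rack under conjugation. -/
def conjSetRack {G : Type*} [Group G] (D : Set G)
    (hD : ∀ g : G, ∀ x ∈ D, g * x * g⁻¹ ∈ D) : Rack' D where
  act x y := ⟨(x : G) * y * (x : G)⁻¹, hD x y y.2⟩
  act_bijective x := by
    constructor
    · intro a b h
      have h' : (x : G) * a * (x : G)⁻¹ = (x : G) * b * (x : G)⁻¹ :=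
        congrArg Subtype.val h
      exact Subtype.ext (mul_left_cancel (mul_right_cancel h'))
    · intro b
      refine ⟨⟨(x : G)⁻¹ * b * x, ?_⟩, ?_⟩
      · simpa using hD (x : G)⁻¹ b b.2
      · apply Subtype.ext
        show (x : G) * ((x : G)⁻¹ * b * x) * (x : G)⁻¹ = (b : G)
        group
  self_distrib x y z :=
    Subtype.ext (show
      (x : G) * ((y : G) * z * (y : G)⁻¹) * (x : G)⁻¹ =
        ((x : G) * y * (x : G)⁻¹) * ((x : G) * z * (x : G)⁻¹) *
          ((x : G) * y * (x : G)⁻¹)⁻¹ from by group)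

/-- The conjugation rack on the conjugacy class of an element `g` of a group. -/
def conjClassRack {G : Type*} [Group G] (g : G) : Rack' {h : G // IsConj g h} :=
  conjSetRack {h : G | IsConj g h} (fun a x hx => hx.trans (isConj_iff.mpr ⟨a, rfl⟩))

/-- Let `(G, D)` be a `3`-transposition group with `D` finite, such that `D` is an
indecomposable rack under conjugation, and let `Y ⊆ D` be a minimal subset generating
`D` as a rack. Then the graph on `Y` in which distinct `x, y` are adjacent iff
`ord(xy) = 3` is connected. -/
theorem innerGroup_mapsTo_aux {X : Type*} [Finite X] (R : Rack' X) (S : Set X)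
    (hS : ∀ x : X, Set.MapsTo (R.act x) S S) :
    ∀ g ∈ R.innerGroup, Set.MapsTo (⇑g) S S := by
  intro g hg
  have hg' : g ∈ Subgroup.closure (Set.range fun x => R.phi x) := hg
  clear hg
  induction hg' using Subgroup.closure_induction with
  | mem g hgmem =>
    obtain ⟨x, rfl⟩ := hgmem
    exact hS x
  | one => intro d hd; exact hd
  | mul a b _ _ ha hb =>
    intro d hd
    rw [Equiv.Perm.mul_apply]
    exact ha (hb hd)
  | inv a _ ha =>
    intro d hd
    have hb : Set.BijOn (⇑a) S S :=
      (S.toFinite.injOn_iff_bijOn_of_mapsTo ha).1 (a.injective.injOn)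
    obtain ⟨z, hz, hz'⟩ := hb.surjOn hd
    have hz2 : a⁻¹ d = z := by rw [← hz', Equiv.Perm.inv_def, Equiv.symm_apply_apply]
    rw [hz2]
    exact hz

theorem graph_of_minimal_generating_set_connected {G : Type*} [Group G]
    (D : Set G) (hfin : D.Finite) (hne : D.Nonempty)
    (hinv : ∀ x ∈ D, x * x = 1 ∧ x ≠ 1)
    (hconj : ∀ g : G, ∀ x ∈ D, g * x * g⁻¹ ∈ D)
    (hgen : Subgroup.closure D = ⊤)
    (hord : ∀ x ∈ D, ∀ y ∈ D, orderOf (x * y) ∈ ({1, 2, 3} : Set ℕ))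
    (hInd : (conjSetRack D hconj).IsIndecomposable)
    (Y : Set D) (hYne : Y.Nonempty)
    (hY : ∀ S : Set D, (conjSetRack D hconj).IsSubrack S → Y ⊆ S → S = Set.univ)
    (hmin : ∀ Y' : Set D, Y' ⊆ Y →
      (∀ S : Set D, (conjSetRack D hconj).IsSubrack S → Y' ⊆ S → S = Set.univ) →
      Y' = Y) :
    (SimpleGraph.fromRel fun a b : Y => orderOf ((a : G) * (b : G)) = 3).Connected := by
  classical
  have hDfin : Finite ↥D := hfin.to_subtype
  set R := conjSetRack D hconj with hRdef
  set Gr := SimpleGraph.fromRel fun a b : Y => orderOf ((a : G) * (b : G)) = 3 with hGr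
  have hinvol : ∀ a : ↥D, (a : G)⁻¹ = (a : G) := fun a =>
    inv_eq_of_mul_eq_one_right (hinv a a.2).1
  -- act formula and fixing of commuting elements
  have hactval : ∀ a b : ↥D, ((R.act a b : ↥D) : G) = (a : G) * b * (a : G)⁻¹ :=
    fun a b => rfl
  have hfix : ∀ a b : ↥D, Commute (a : G) (b : G) → R.act a b = b := by
    intro a b h
    apply Subtype.ext
    rw [hactval, h.eq, mul_inv_cancel_right]
  -- closed sets and closure operator
  let Closed : Set ↥D → Prop := fun S => ∀ x ∈ S, ∀ y ∈ S, R.act x y ∈ S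
  let cl : Set ↥D → Set ↥D := fun A => ⋂₀ {S | A ⊆ S ∧ Closed S}
  have subset_cl : ∀ A, A ⊆ cl A := fun A a ha S hS => hS.1 ha
  have cl_min : ∀ A S, A ⊆ S → Closed S → cl A ⊆ S := fun A S h1 h2 x hx => hx S ⟨h1, h2⟩
  have cl_closed : ∀ A, Closed (cl A) := by
    intro A x hx y hy S hS
    exact hS.2 x (hx S hS) y (hy S hS)
  have subrack_of_closed : ∀ S : Set ↥D, S.Nonempty → Closed S → R.IsSubrack S := by
    intro S hSne hScl
    refine ⟨hSne, hScl, fun x hx y hy => ?_⟩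
    have hm : Set.MapsTo (R.act x) S S := fun a ha => hScl x hx a ha
    have hb : Set.BijOn (R.act x) S S :=
      (S.toFinite.injOn_iff_bijOn_of_mapsTo hm).1 ((R.act_bijective x).1.injOn)
    obtain ⟨z, hz, hz'⟩ := hb.surjOn hy
    exact ⟨z, hz, hz'⟩
  -- commuting with a fixed element is a closed condition
  have hClosedC : ∀ b : ↥D, Closed {d : ↥D | Commute (d : G) (b : G)} := by
    intro b x hx y hy
    show Commute ((R.act x y : ↥D) : G) (b : G)
    rw [hactval]
    exact (hx.mul_left hy).mul_left hx.inv_left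
  -- set up the connectivity argument
  obtain ⟨y₀, hy₀⟩ := hYne
  let v₀ : ↥Y := ⟨y₀, hy₀⟩
  by_cases hreach : ∀ v : ↥Y, Gr.Reachable v₀ v
  · have : Nonempty ↥Y := ⟨v₀⟩
    exact SimpleGraph.Connected.mk (fun u v => (hreach u).symm.trans (hreach v))
  exfalso
  push_neg at hreach
  let Y₁ : Set ↥D := {y | ∃ h : y ∈ Y, Gr.Reachable v₀ ⟨y, h⟩}
  let Y₂ : Set ↥D := Y \ Y₁
  have hY₁Y : Y₁ ⊆ Y := fun y hy => hy.1
  have hy₀Y₁ : y₀ ∈ Y₁ := ⟨hy₀, SimpleGraph.Reachable.refl v₀⟩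
  obtain ⟨w, hw⟩ := hreach
  have hwY₂ : (w : ↥D) ∈ Y₂ := by
    refine ⟨w.2, ?_⟩
    rintro ⟨h, hr⟩
    exact hw hr
  -- elements of Y₁ and Y₂ commute
  have hcross : ∀ a ∈ Y₁, ∀ b ∈ Y₂, Commute (a : G) (b : G) := by
    intro a ha b hb
    obtain ⟨haY, hra⟩ := ha
    have hbY : b ∈ Y := hb.1
    have hab : a ≠ b := by
      rintro rfl
      exact hb.2 ⟨haY, hra⟩
    have hnadj : ¬ Gr.Adj ⟨a, haY⟩ ⟨b, hbY⟩ := by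
      intro hadj
      exact hb.2 ⟨hbY, hra.trans hadj.reachable⟩
    rw [hGr, SimpleGraph.fromRel_adj] at hnadj
    push_neg at hnadj
    have hne3 : orderOf ((a : G) * (b : G)) ≠ 3 := by
      intro h3
      exact (hnadj (fun h => hab (Subtype.ext_iff.1 h))).1 h3
    have hmem := hord (a : G) a.2 (b : G) b.2
    simp only [Set.mem_insert_iff, Set.mem_singleton_iff] at hmem
    rcases hmem with h1 | h2 | h3
    · exfalso
      apply hab
      apply Subtype.ext
      have : (a : G) * (b : G) = 1 := orderOf_eq_one_iff.1 h1
      have := inv_eq_of_mul_eq_one_right this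
      rw [hinvol a] at this
      exact this
    · have hsq : ((a : G) * b) * ((a : G) * b) = 1 := by
        have := pow_orderOf_eq_one ((a : G) * (b : G))
        rw [h2, sq] at this
        exact this
      have h' : ((a : G) * b)⁻¹ = (a : G) * b := inv_eq_of_mul_eq_one_right hsq
      show (a : G) * b = b * a
      calc (a : G) * b = ((a : G) * b)⁻¹ := h'.symm
        _ = (b : G)⁻¹ * (a : G)⁻¹ := mul_inv_rev _ _
        _ = (b : G) * a := by rw [hinvol a, hinvol b]
    · exact absurd h3 hne3
  -- the closures of Y₁ and Y₂ elementwise commute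
  let D₁ := cl Y₁
  let D₂ := cl Y₂
  have h12 : ∀ a ∈ D₁, ∀ b ∈ D₂, Commute (a : G) (b : G) := by
    intro a ha b hb
    have h1 : ∀ b' ∈ Y₂, Commute (a : G) (b' : G) := fun b' hb' =>
      cl_min Y₁ _ (fun d hd => hcross d hd b' hb') (hClosedC b') ha
    have h2 : b ∈ {d : ↥D | Commute (d : G) (a : G)} :=
      cl_min Y₂ _ (fun d hd => (h1 d hd).symm) (hClosedC a) hb
    exact h2.symm
  -- D₁ ∪ D₂ is a subrack containing Y, hence everything
  have hUcl : Closed (D₁ ∪ D₂) := by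
    rintro x (hx | hx) y (hy | hy)
    · exact Or.inl (cl_closed Y₁ x hx y hy)
    · right
      rw [hfix x y (h12 x hx y hy)]
      exact hy
    · left
      rw [hfix x y ((h12 y hy x hx).symm)]
      exact hy
    · exact Or.inr (cl_closed Y₂ x hx y hy)
  have hYsub : Y ⊆ D₁ ∪ D₂ := by
    intro y hy
    by_cases h : y ∈ Y₁
    · exact Or.inl (subset_cl Y₁ h)
    · exact Or.inr (subset_cl Y₂ ⟨hy, h⟩)
  have hUuniv : D₁ ∪ D₂ = Set.univ :=
    hY _ (subrack_of_closed _ ⟨y₀, Or.inl (subset_cl Y₁ hy₀Y₁)⟩ hUcl) hYsub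
  -- D₁ is invariant under the inner group
  have hinvar : ∀ g ∈ R.innerGroup, ∀ d ∈ D₁, g d ∈ D₁ := by
    have hS : ∀ x : ↥D, Set.MapsTo (R.act x) D₁ D₁ := by
      intro x d hd
      have hx : x ∈ D₁ ∪ D₂ := hUuniv ▸ Set.mem_univ x
      rcases hx with hx | hx
      · exact cl_closed Y₁ x hx d hd
      · rw [hfix x d ((h12 d hd x hx).symm)]
        exact hd
    intro g hg d hd
    exact innerGroup_mapsTo_aux R D₁ hS g hg hd
  -- indecomposability forces D₁ = univ
  have hD₁univ : D₁ = Set.univ := by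
    apply Set.eq_univ_of_forall
    intro d
    obtain ⟨g, hg, hgd⟩ := hInd y₀ d
    have : g y₀ ∈ D₁ := hinvar g hg y₀ (subset_cl Y₁ hy₀Y₁)
    rwa [hgd] at this
  -- hence Y₁ generates, so Y₁ = Y by minimality, contradicting Y₂ ≠ ∅
  have hYgen1 : ∀ S : Set ↥D, R.IsSubrack S → Y₁ ⊆ S → S = Set.univ := by
    intro S hS hsub
    have hsub' : D₁ ⊆ S := cl_min Y₁ S hsub hS.2.1
    exact Set.eq_univ_of_univ_subset (hD₁univ ▸ hsub')
  have hY₁eq := hmin Y₁ hY₁Y hYgen1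
  apply hwY₂.2
  rw [hY₁eq]
  exact hwY₂.1
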